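/- Fix an integer m ≥ 2 and p ∈ (0,1). With S = Fin m, Q = Bool × Fin m, the Ising channel P(y|x,s) (1 if x = s = y; 1/2 if x ≠ s and y ∈ {x,s}; 0 otherwise), the test distribution T(y|(1,q_s)) = (1+p)/2 if y = q_s else (1-p)/(2(m-1)) and T(y|(0,q_s)) = 2p/(1+p) if y = q_s else (1-p)/((1+p)(m-1)), the stationary distribution π(s,(1,q_s)) = (2/(m(p+3)))·1[q_s = s], π(s,(0,q_s)) = 2p/(m(p+3)) if q_s = s and (1-p)/(m(m-1)(p+3)) otherwise, and the input distribution u(x|s,(1,s)) = p·1[x=s] + ((1-p)/(m-1))·1[x≠s], u(x|s,(0,q_s)) = 1[x=s] (u arbitrary stochastic at nodes (1,q_s) with q_s ≠ s): the conditional mutual information I(X,S;Y|Q) := Σ_{s,q,x,y} π(s,q)·u(x|s,q)·P(y|x,s)·log₂( P(y|x,s)/T(y|q) ) equals 2·(H₂(p) + (1-p)·log₂(m-1))/(p+3). -/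

import Mathlib

/-- The binary entropy function in bits, with the convention `0 · log₂ 0 = 0`. -/
noncomputable def binEnt (x : ℝ) : ℝ :=
  -x * Real.logb 2 x - (1 - x) * Real.logb 2 (1 - x)

/-- The Ising channel law `P(y|x,s)`. -/
noncomputable def IsingP {m : ℕ} (y x s : Fin m) : ℝ :=
  if x = s then (if y = s then 1 else 0)
  else if y = x ∨ y = s then 1 / 2 else 0

/-- The test distribution `T(y|q)` of the Q-graph for `|X| ≤ 8`. -/
noncomputable def testT (p : ℝ) {m : ℕ} (y : Fin m) (q : Bool × Fin m) : ℝ :=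
  if q.1 then (if y = q.2 then (1 + p) / 2 else (1 - p) / (2 * ((m : ℝ) - 1)))
  else (if y = q.2 then 2 * p / (1 + p) else (1 - p) / ((1 + p) * ((m : ℝ) - 1)))

/-- The stationary distribution `π` on `S × Q`. -/
noncomputable def statDist (p : ℝ) {m : ℕ} (sq : Fin m × (Bool × Fin m)) : ℝ :=
  if sq.2.1 then (if sq.2.2 = sq.1 then 2 / (m * (p + 3)) else 0)
  else (if sq.2.2 = sq.1 then 2 * p / (m * (p + 3))
        else (1 - p) / (m * ((m : ℝ) - 1) * (p + 3)))

/-- Sum of an if-then-else with constant branches over `Fin m`. -/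
lemma sum_ite_const' {m : ℕ} (hm : 1 ≤ m) (s : Fin m) (A B : ℝ) :
    ∑ x : Fin m, (if x = s then A else B) = A + ((m : ℝ) - 1) * B := by
  classical
  have h1 : Finset.filter (fun x => x = s) Finset.univ = {s} := by
    ext x; simp
  have h2 : Finset.filter (fun x => ¬ x = s) Finset.univ = Finset.univ.erase s := by
    ext x; simp [Finset.mem_erase]
  rw [Finset.sum_ite, h1, h2, Finset.sum_singleton, Finset.sum_const,
    Finset.card_erase_of_mem (Finset.mem_univ s), Finset.card_univ, Fintype.card_fin,
    nsmul_eq_mul, Nat.cast_sub hm]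
  push_cast
  ring

/-- achievable rate, Lemma 2 of the paper: with the stationary
distribution `π`, the input distribution `u` as specified, the Ising channel `P`
and the test distribution `T`, the conditional mutual information
`I(X,S;Y|Q) = Σ_{s,q,x,y} π(s,q)u(x|s,q)P(y|x,s)log₂(P(y|x,s)/T(y|q))` equals
`2(H₂(p) + (1-p)log₂(m-1))/(p+3)` (convention `0·log₂(0/t) = 0`). -/
theorem ising_achievable_rate (m : ℕ) (hm : 2 ≤ m) (p : ℝ)
    (hp : p ∈ Set.Ioo (0 : ℝ) 1)
    (u : Fin m → Fin m → Bool × Fin m → ℝ)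
    (hu_nonneg : ∀ x s q, 0 ≤ u x s q)
    (hu_sum : ∀ s q, ∑ x : Fin m, u x s q = 1)
    (hu_known : ∀ s x : Fin m,
      u x s (true, s) = if x = s then p else (1 - p) / ((m : ℝ) - 1))
    (hu_unknown : ∀ (s qs x : Fin m),
      u x s (false, qs) = if x = s then 1 else 0) :
    (∑ s : Fin m, ∑ q : Bool × Fin m, ∑ x : Fin m, ∑ y : Fin m,
        statDist p (s, q) * u x s q * IsingP y x s *
          Real.logb 2 (IsingP y x s / testT p y q))
      = 2 * (binEnt p + (1 - p) * Real.logb 2 ((m : ℝ) - 1)) / (p + 3) := by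
  classical
  obtain ⟨hp0, hp1⟩ := hp
  have hM2 : (2:ℝ) ≤ (m:ℝ) := by exact_mod_cast hm
  have hM1 : (0:ℝ) < (m:ℝ) - 1 := by linarith
  have hM0 : (0:ℝ) < (m:ℝ) := by linarith
  have h1p : (0:ℝ) < 1 + p := by linarith
  have h1mp : (0:ℝ) < 1 - p := by linarith
  have hp3 : (0:ℝ) < p + 3 := by linarith
  -- y-sum lemma for x = s
  have hys : ∀ (s : Fin m) (q : Bool × Fin m),
      ∑ y : Fin m, IsingP y s s * Real.logb 2 (IsingP y s s / testT p y q)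
        = Real.logb 2 (1 / testT p s q) := by
    intro s q
    have h : ∀ y : Fin m, IsingP y s s * Real.logb 2 (IsingP y s s / testT p y q)
        = if y = s then Real.logb 2 (1 / testT p s q) else 0 := by
      intro y
      by_cases h : y = s
      · subst h; simp [IsingP]
      · simp [IsingP, h]
    rw [Finset.sum_congr rfl fun y _ => h y]
    simp
  -- y-sum lemma for x ≠ s
  have hyx : ∀ (s x : Fin m), x ≠ s → ∀ q : Bool × Fin m,
      ∑ y : Fin m, IsingP y x s * Real.logb 2 (IsingP y x s / testT p y q)
        = 1/2 * Real.logb 2 ((1/2) / testT p x q)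
          + 1/2 * Real.logb 2 ((1/2) / testT p s q) := by
    intro s x hxs q
    have h : ∀ y : Fin m, IsingP y x s * Real.logb 2 (IsingP y x s / testT p y q)
        = (if y = x then 1/2 * Real.logb 2 ((1/2) / testT p x q) else 0)
          + (if y = s then 1/2 * Real.logb 2 ((1/2) / testT p s q) else 0) := by
      intro y
      by_cases h1 : y = x
      · subst h1; simp [IsingP, hxs]
      · by_cases h2 : y = s
        · subst h2; simp [IsingP, hxs, h1]
        · simp [IsingP, hxs, h1, h2]
    rw [Finset.sum_congr rfl fun y _ => h y, Finset.sum_add_distrib]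
    simp
  have key : ∀ s : Fin m,
      ∑ q : Bool × Fin m, ∑ x : Fin m, ∑ y : Fin m,
        statDist p (s, q) * u x s q * IsingP y x s *
          Real.logb 2 (IsingP y x s / testT p y q)
      = 2 * (binEnt p + (1 - p) * Real.logb 2 ((m : ℝ) - 1)) / (p + 3) / m := by
    intro s
    rw [Fintype.sum_prod_type]
    rw [Fintype.sum_bool]
    simp only [mul_assoc, ← Finset.mul_sum]
    have hInnerT : ∑ x : Fin m, u x s (true, s) *
        ∑ y : Fin m, IsingP y x s * Real.logb 2 (IsingP y x s / testT p y (true, s))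
        = p * Real.logb 2 (1/((1+p)/2))
          + ((m:ℝ)-1) * ((1-p)/((m:ℝ)-1) *
            (1/2 * Real.logb 2 (1/2/((1-p)/(2*((m:ℝ)-1))))
              + 1/2 * Real.logb 2 (1/2/((1+p)/2)))) := by
      have hx : ∀ x : Fin m, u x s (true, s) *
          ∑ y : Fin m, IsingP y x s * Real.logb 2 (IsingP y x s / testT p y (true, s))
          = if x = s then p * Real.logb 2 (1/((1+p)/2))
            else (1-p)/((m:ℝ)-1) *
              (1/2 * Real.logb 2 (1/2/((1-p)/(2*((m:ℝ)-1))))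
                + 1/2 * Real.logb 2 (1/2/((1+p)/2))) := by
        intro x
        by_cases h : x = s
        · rw [h, hys s (true, s), hu_known]
          simp [testT]
        · rw [hyx s x h (true, s), hu_known]
          simp [testT, h]
      rw [Finset.sum_congr rfl fun x _ => hx x, sum_ite_const' (by omega) s]
    have hptT : ∀ q2 : Fin m, statDist p (s, true, q2) *
        (∑ x : Fin m, u x s (true, q2) *
          ∑ y : Fin m, IsingP y x s * Real.logb 2 (IsingP y x s / testT p y (true, q2)))
        = if q2 = s then 2/((m:ℝ)*(p+3)) *
            (p * Real.logb 2 (1/((1+p)/2))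
              + ((m:ℝ)-1) * ((1-p)/((m:ℝ)-1) *
                (1/2 * Real.logb 2 (1/2/((1-p)/(2*((m:ℝ)-1))))
                  + 1/2 * Real.logb 2 (1/2/((1+p)/2))))) else 0 := by
      intro q2
      by_cases hq : q2 = s
      · subst hq
        rw [hInnerT, if_pos rfl]
        simp [statDist]
      · simp [statDist, hq]
    have hInnerF : ∀ q2 : Fin m, ∑ x : Fin m, u x s (false, q2) *
        ∑ y : Fin m, IsingP y x s * Real.logb 2 (IsingP y x s / testT p y (false, q2))
        = Real.logb 2 (1 / testT p s (false, q2)) := by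
      intro q2
      have hx : ∀ x : Fin m, u x s (false, q2) *
          ∑ y : Fin m, IsingP y x s * Real.logb 2 (IsingP y x s / testT p y (false, q2))
          = if x = s then Real.logb 2 (1 / testT p s (false, q2)) else 0 := by
        intro x
        by_cases h : x = s
        · subst h
          rw [hu_unknown, hys]
          simp
        · rw [hu_unknown]
          simp [h]
      rw [Finset.sum_congr rfl fun x _ => hx x]
      simp
    have hptF : ∀ q2 : Fin m, statDist p (s, false, q2) *
        (∑ x : Fin m, u x s (false, q2) *
          ∑ y : Fin m, IsingP y x s * Real.logb 2 (IsingP y x s / testT p y (false, q2)))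
        = if q2 = s then 2*p/((m:ℝ)*(p+3)) * Real.logb 2 (1/(2*p/(1+p)))
          else (1-p)/((m:ℝ)*((m:ℝ)-1)*(p+3)) *
            Real.logb 2 (1/((1-p)/((1+p)*((m:ℝ)-1)))) := by
      intro q2
      rw [hInnerF q2]
      by_cases hq : q2 = s
      · subst hq
        simp [statDist, testT]
      · have hq' : ¬ s = q2 := fun h => hq h.symm
        simp [statDist, testT, hq, hq']
    rw [Finset.sum_congr rfl fun q2 _ => hptT q2,
      Finset.sum_congr rfl fun q2 _ => hptF q2, sum_ite_const' (by omega) s,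
      sum_ite_const' (by omega) s]
    have l1 : Real.logb 2 (1/((1+p)/2)) = 1 - Real.logb 2 (1+p) := by
      rw [show (1:ℝ)/((1+p)/2) = 2/(1+p) from by field_simp,
        Real.logb_div two_ne_zero (ne_of_gt h1p)]
      simp
    have l2 : Real.logb 2 (1/2/((1+p)/2)) = - Real.logb 2 (1+p) := by
      rw [show (1:ℝ)/2/((1+p)/2) = (1+p)⁻¹ from by field_simp, Real.logb_inv]
    have l3 : Real.logb 2 (1/2/((1-p)/(2*((m:ℝ)-1))))
        = Real.logb 2 ((m:ℝ)-1) - Real.logb 2 (1-p) := by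
      rw [show (1:ℝ)/2/((1-p)/(2*((m:ℝ)-1))) = ((m:ℝ)-1)/(1-p) from by
          field_simp,
        Real.logb_div (ne_of_gt hM1) (ne_of_gt h1mp)]
    have l4 : Real.logb 2 (1/(2*p/(1+p)))
        = Real.logb 2 (1+p) - 1 - Real.logb 2 p := by
      rw [show (1:ℝ)/(2*p/(1+p)) = (1+p)/(2*p) from by field_simp,
        Real.logb_div (ne_of_gt h1p) (by positivity),
        Real.logb_mul two_ne_zero (ne_of_gt hp0)]
      simp
      ring
    have l5 : Real.logb 2 (1/((1-p)/((1+p)*((m:ℝ)-1))))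
        = Real.logb 2 (1+p) + Real.logb 2 ((m:ℝ)-1) - Real.logb 2 (1-p) := by
      rw [show (1:ℝ)/((1-p)/((1+p)*((m:ℝ)-1))) = ((1+p)*((m:ℝ)-1))/(1-p) from by
          field_simp,
        Real.logb_div (by positivity) (ne_of_gt h1mp),
        Real.logb_mul (ne_of_gt h1p) (ne_of_gt hM1)]
    rw [l1, l2, l3, l4, l5]
    simp only [binEnt]
    field_simp
    ring
  rw [Finset.sum_congr rfl fun s _ => key s, Finset.sum_const, Finset.card_univ,
    Fintype.card_fin, nsmul_eq_mul]
  field_simp
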